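/- For continuous nonnegative f, g on [0,1] and a partition 0 = t₁ < t₂ < ⋯ < tₙ = 1, define the discrete approximation H̃(f,g) = max{ max_{i : g(tᵢ) > f(tᵢ)} dist((tᵢ, g(tᵢ)), {(tⱼ, f(tⱼ))}ⱼ), max_{i : f(tᵢ) > g(tᵢ)} dist((tᵢ, f(tᵢ)), {(tⱼ, g(tⱼ))}ⱼ) } (with empty maxima equal to 0). Then as the mesh max_i |t_{i+1} − tᵢ| → 0, H̃(f,g) → ℍ(f,g). -/

import Mathlib

open Set Metric Filter

def hypo (f : ℝ → ℝ) : Set (EuclideanSpace ℝ (Fin 2)) :=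
  {p | p 0 ∈ Set.Icc (0:ℝ) 1 ∧ 0 ≤ p 1 ∧ p 1 ≤ f (p 0)}

noncomputable def HH (f g : ℝ → ℝ) : ℝ := Metric.hausdorffDist (hypo f) (hypo g)

/-- The point `(a, b)` of the Euclidean plane. -/
noncomputable def pt (a b : ℝ) : EuclideanSpace ℝ (Fin 2) :=
  (WithLp.equiv 2 (Fin 2 → ℝ)).symm ![a, b]

/-- The discrete approximation `H̃(f,g)` associated with the partition points
`t 0, …, t n` (empty maxima are `0`, matching `sSup ∅ = 0` in `ℝ`). -/
noncomputable def Htilde (f g : ℝ → ℝ) (n : ℕ) (t : ℕ → ℝ) : ℝ :=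
  max
    (sSup {d : ℝ | ∃ i ≤ n, f (t i) < g (t i) ∧
      d = Metric.infDist (pt (t i) (g (t i))) {q | ∃ j ≤ n, q = pt (t j) (f (t j))}})
    (sSup {d : ℝ | ∃ i ≤ n, g (t i) < f (t i) ∧
      d = Metric.infDist (pt (t i) (f (t i))) {q | ∃ j ≤ n, q = pt (t j) (g (t j))}})

/-! ### Auxiliary definitions and lemmas -/

/-- The discrete sample set of `f`. -/
noncomputable def Dset (f : ℝ → ℝ) (n : ℕ) (t : ℕ → ℝ) : Set (EuclideanSpace ℝ (Fin 2)) :=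
  {q | ∃ j ≤ n, q = pt (t j) (f (t j))}

/-- The set of distances appearing in one of the two suprema of `Htilde`. -/
noncomputable def Aset (f g : ℝ → ℝ) (n : ℕ) (t : ℕ → ℝ) : Set ℝ :=
  {d : ℝ | ∃ i ≤ n, f (t i) < g (t i) ∧
    d = Metric.infDist (pt (t i) (g (t i))) (Dset f n t)}

lemma HH_def (f g : ℝ → ℝ) : HH f g = Metric.hausdorffDist (hypo f) (hypo g) := rfl

lemma Htilde_eq (f g : ℝ → ℝ) (n : ℕ) (t : ℕ → ℝ) :
    Htilde f g n t = max (sSup (Aset f g n t)) (sSup (Aset g f n t)) := rfl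

lemma pt_apply0 (a b : ℝ) : pt a b 0 = a := rfl

lemma pt_apply1 (a b : ℝ) : pt a b 1 = b := rfl

lemma pt_eta (p : EuclideanSpace ℝ (Fin 2)) : pt (p 0) (p 1) = p := by
  ext i
  fin_cases i <;> rfl

lemma dist_pt (a b c d : ℝ) :
    dist (pt a b) (pt c d) = Real.sqrt ((a - c) ^ 2 + (b - d) ^ 2) := by
  rw [EuclideanSpace.dist_eq, Fin.sum_univ_two, pt_apply0, pt_apply0, pt_apply1, pt_apply1,
    Real.dist_eq, Real.dist_eq, sq_abs, sq_abs]

lemma dist_pt_mono {a b c d a' b' c' d' : ℝ} (h1 : |a - c| ≤ |a' - c'|)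
    (h2 : |b - d| ≤ |b' - d'|) :
    dist (pt a b) (pt c d) ≤ dist (pt a' b') (pt c' d') := by
  rw [dist_pt, dist_pt]
  apply Real.sqrt_le_sqrt
  have h1' : (a - c) ^ 2 ≤ (a' - c') ^ 2 := by
    rw [← sq_abs (a - c), ← sq_abs (a' - c')]
    exact pow_le_pow_left₀ (abs_nonneg _) h1 2
  have h2' : (b - d) ^ 2 ≤ (b' - d') ^ 2 := by
    rw [← sq_abs (b - d), ← sq_abs (b' - d')]
    exact pow_le_pow_left₀ (abs_nonneg _) h2 2
  linarith

lemma dist_pt_le (a b c d : ℝ) : dist (pt a b) (pt c d) ≤ |a - c| + |b - d| := by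
  rw [dist_pt]
  have h : (a - c) ^ 2 + (b - d) ^ 2 ≤ (|a - c| + |b - d|) ^ 2 := by
    nlinarith [sq_abs (a - c), sq_abs (b - d),
      mul_nonneg (abs_nonneg (a - c)) (abs_nonneg (b - d))]
  calc Real.sqrt ((a - c) ^ 2 + (b - d) ^ 2) ≤ Real.sqrt ((|a - c| + |b - d|) ^ 2) :=
        Real.sqrt_le_sqrt h
    _ = |a - c| + |b - d| := Real.sqrt_sq (by positivity)

lemma mem_hypo {f : ℝ → ℝ} {a b : ℝ} (ha : a ∈ Set.Icc (0:ℝ) 1) (hb : 0 ≤ b)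
    (hbf : b ≤ f a) : pt a b ∈ hypo f := ⟨ha, hb, hbf⟩

lemma hypo_nonempty (f : ℝ → ℝ) (hf0 : ∀ x ∈ Set.Icc (0:ℝ) 1, 0 ≤ f x) :
    (hypo f).Nonempty :=
  ⟨pt 0 0, mem_hypo ⟨le_refl _, zero_le_one⟩ le_rfl (hf0 0 ⟨le_refl _, zero_le_one⟩)⟩

lemma hypo_bounded (f : ℝ → ℝ) (hfc : ContinuousOn f (Set.Icc (0:ℝ) 1)) :
    Bornology.IsBounded (hypo f) := by
  obtain ⟨C, hC⟩ := isCompact_Icc.exists_bound_of_continuousOn hfc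
  have hC0 : 0 ≤ C := le_trans (norm_nonneg _) (hC 0 ⟨le_refl _, zero_le_one⟩)
  apply Bornology.IsBounded.subset (Metric.isBounded_closedBall (x := pt 0 0) (r := 1 + C))
  rintro p ⟨hp0, hp1, hpf⟩
  rw [Metric.mem_closedBall, ← pt_eta p]
  refine le_trans (dist_pt_le _ _ _ _) ?_
  have h1 : |p 0 - 0| ≤ 1 := by
    rw [sub_zero, abs_of_nonneg hp0.1]; exact hp0.2
  have h2 : |p 1 - 0| ≤ C := by
    rw [sub_zero, abs_of_nonneg hp1]
    exact le_trans hpf (le_trans (le_abs_self _) (hC _ hp0))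
  linarith

lemma my_le_infDist {s : Set (EuclideanSpace ℝ (Fin 2))} {x : EuclideanSpace ℝ (Fin 2)}
    {r : ℝ} (hs : s.Nonempty) (h : ∀ y ∈ s, r ≤ dist x y) : r ≤ Metric.infDist x s := by
  by_contra hc
  push_neg at hc
  obtain ⟨y, hy, hlt⟩ := (Metric.infDist_lt_iff hs).mp hc
  exact absurd hlt (not_lt.mpr (h y hy))

lemma abs_sub_le_of_uIcc {x₀ a x : ℝ} (hx : x ∈ Set.uIcc x₀ a) : |x₀ - x| ≤ |x₀ - a| := by
  have h3 : x₀ - a ≤ |x₀ - a| := le_abs_self _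
  have h4 : -|x₀ - a| ≤ x₀ - a := neg_abs_le _
  rw [abs_le]
  rcases Set.mem_uIcc.mp hx with ⟨h1, h2⟩ | ⟨h1, h2⟩ <;> constructor <;> linarith

/-- Closest-point reduction: for a point strictly above the graph, every point of the
hypograph is at least as far as some point *on the graph*. -/
lemma lemA (f : ℝ → ℝ) (hfc : ContinuousOn f (Set.Icc (0:ℝ) 1)) {x₀ y₀ : ℝ}
    (hx₀ : x₀ ∈ Set.Icc (0:ℝ) 1) (hy₀ : f x₀ < y₀) {q : EuclideanSpace ℝ (Fin 2)}
    (hq : q ∈ hypo f) :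
    ∃ x ∈ Set.Icc (0:ℝ) 1, dist (pt x₀ y₀) (pt x (f x)) ≤ dist (pt x₀ y₀) q := by
  obtain ⟨ha, hb, hbf⟩ := hq
  rw [← pt_eta q]
  set a := q 0
  set b := q 1
  by_cases hfa : y₀ ≤ f a
  · -- intermediate value: some x between x₀ and a has f x = y₀
    have hsub : Set.uIcc x₀ a ⊆ Set.Icc (0:ℝ) 1 := by
      rw [Set.uIcc_eq_union]
      exact Set.union_subset (Set.Icc_subset_Icc hx₀.1 ha.2) (Set.Icc_subset_Icc ha.1 hx₀.2)
    have hcont : ContinuousOn f (Set.uIcc x₀ a) := hfc.mono hsub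
    have hy₀mem : y₀ ∈ Set.uIcc (f x₀) (f a) := by
      rcases Set.mem_uIcc.mpr (Or.inl ⟨le_of_lt hy₀, hfa⟩) with h; exact h
    obtain ⟨x, hx, hfx⟩ := intermediate_value_uIcc hcont hy₀mem
    refine ⟨x, hsub hx, ?_⟩
    rw [hfx]
    exact dist_pt_mono (abs_sub_le_of_uIcc hx) (by simp [abs_nonneg])
  · push_neg at hfa
    refine ⟨a, ha, ?_⟩
    apply dist_pt_mono (le_refl _)
    rw [abs_of_nonneg (by linarith), abs_of_nonneg (by linarith)]
    linarith

/-- Monotonicity of the distance to a hypograph in the height of the point. -/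
lemma lemB (f : ℝ → ℝ) (hne : (hypo f).Nonempty) {x y y' : ℝ} (hy : 0 ≤ y) (hyy' : y ≤ y') :
    Metric.infDist (pt x y) (hypo f) ≤ Metric.infDist (pt x y') (hypo f) := by
  apply my_le_infDist hne
  intro q hq
  obtain ⟨ha, hb, hbf⟩ := hq
  by_cases hby : q 1 ≤ y
  · refine le_trans (Metric.infDist_le_dist_of_mem ⟨ha, hb, hbf⟩) ?_
    rw [← pt_eta q]
    apply dist_pt_mono (le_refl _)
    rw [abs_of_nonneg (by linarith), abs_of_nonneg (by linarith)]
    linarith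
  · push_neg at hby
    have hmem : pt (q 0) y ∈ hypo f := mem_hypo ha hy (by linarith)
    refine le_trans (Metric.infDist_le_dist_of_mem hmem) ?_
    rw [← pt_eta q]
    apply dist_pt_mono (le_refl _)
    simp [abs_nonneg]

lemma Aset_finite (f g : ℝ → ℝ) (n : ℕ) (t : ℕ → ℝ) : (Aset f g n t).Finite := by
  apply Set.Finite.subset ((Set.finite_Iic n).image
    (fun i => Metric.infDist (pt (t i) (g (t i))) (Dset f n t)))
  rintro d ⟨i, hi, -, rfl⟩
  exact ⟨i, hi, rfl⟩

lemma Aset_sSup_nonneg (f g : ℝ → ℝ) (n : ℕ) (t : ℕ → ℝ) : 0 ≤ sSup (Aset f g n t) := by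
  apply Real.sSup_nonneg
  rintro d ⟨i, hi, -, rfl⟩
  exact Metric.infDist_nonneg

lemma Dset_nonempty (f : ℝ → ℝ) (n : ℕ) (t : ℕ → ℝ) : (Dset f n t).Nonempty :=
  ⟨pt (t 0) (f (t 0)), 0, Nat.zero_le n, rfl⟩

lemma Dset_subset_hypo (f : ℝ → ℝ) (hf0 : ∀ x ∈ Set.Icc (0:ℝ) 1, 0 ≤ f x)
    (n : ℕ) (t : ℕ → ℝ) (htn : ∀ i ≤ n, t i ∈ Set.Icc (0:ℝ) 1) :
    Dset f n t ⊆ hypo f := by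
  rintro q ⟨j, hj, rfl⟩
  exact mem_hypo (htn j hj) (hf0 _ (htn j hj)) (le_refl _)

/-- One-sided upper bound: the discrete supremum is at most `HH f g` plus a small error. -/
lemma upper_bound (f g : ℝ → ℝ)
    (hf0 : ∀ x ∈ Set.Icc (0:ℝ) 1, 0 ≤ f x)
    (hg0 : ∀ x ∈ Set.Icc (0:ℝ) 1, 0 ≤ g x)
    (hfc : ContinuousOn f (Set.Icc (0:ℝ) 1))
    (hgc : ContinuousOn g (Set.Icc (0:ℝ) 1))
    {ε δ : ℝ} (hε : 0 < ε) (hδ : 0 < δ)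
    (hfu : ∀ x ∈ Set.Icc (0:ℝ) 1, ∀ y ∈ Set.Icc (0:ℝ) 1, |x - y| < δ → |f x - f y| < ε)
    (n : ℕ) (t : ℕ → ℝ) (htn : ∀ i ≤ n, t i ∈ Set.Icc (0:ℝ) 1)
    (hdense : ∀ x ∈ Set.Icc (0:ℝ) 1, ∃ i ≤ n, |x - t i| < δ) :
    sSup (Aset f g n t) ≤ HH f g + (δ + ε) := by
  apply Real.sSup_le
  · rintro d ⟨i, hi, hfg, rfl⟩
    set p := pt (t i) (g (t i)) with hp
    have hti : t i ∈ Set.Icc (0:ℝ) 1 := htn i hi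
    have hpg : p ∈ hypo g := mem_hypo hti (hg0 _ hti) (le_refl _)
    have hfne : (hypo f).Nonempty := hypo_nonempty f hf0
    have hgne : (hypo g).Nonempty := hypo_nonempty g hg0
    have hedist : EMetric.hausdorffEdist (hypo f) (hypo g) ≠ ⊤ :=
      Metric.hausdorffEdist_ne_top_of_nonempty_of_bounded hfne hgne
        (hypo_bounded f hfc) (hypo_bounded g hgc)
    have h1 : Metric.infDist p (hypo f) ≤ HH f g := by
      rw [HH_def, Metric.hausdorffDist_comm]
      exact Metric.infDist_le_hausdorffDist_of_mem hpg
        (by rw [EMetric.hausdorffEdist_comm]; exact hedist)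
    -- infDist to the discrete set is at most infDist to the hypograph plus δ + ε
    have h2 : Metric.infDist p (Dset f n t) ≤ Metric.infDist p (hypo f) + (δ + ε) := by
      have key : Metric.infDist p (Dset f n t) - (δ + ε) ≤ Metric.infDist p (hypo f) := by
        apply my_le_infDist hfne
        intro q hq
        obtain ⟨x, hx, hxle⟩ := lemA f hfc hti hfg hq
        obtain ⟨j, hj, hjx⟩ := hdense x hx
        have hdist : dist (pt x (f x)) (pt (t j) (f (t j))) ≤ δ + ε := by
          refine le_trans (dist_pt_le _ _ _ _) ?_
          have := hfu x hx (t j) (htn j hj) hjx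
          have := le_of_lt hjx
          linarith [le_of_lt (hfu x hx (t j) (htn j hj) hjx), le_of_lt hjx]
        have hmem : pt (t j) (f (t j)) ∈ Dset f n t := ⟨j, hj, rfl⟩
        have := Metric.infDist_le_dist_of_mem hmem (x := p)
        have htri : dist p (pt (t j) (f (t j))) ≤ dist p (pt x (f x)) +
            dist (pt x (f x)) (pt (t j) (f (t j))) := dist_triangle _ _ _
        linarith
      linarith
    linarith
  · have := Metric.hausdorffDist_nonneg (s := hypo f) (t := hypo g)
    rw [HH_def]; linarith

/-- One-sided lower bound: every point of `hypo g` is within the discrete supremum plus a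
small error of `hypo f`. -/
lemma lower_bound (f g : ℝ → ℝ)
    (hf0 : ∀ x ∈ Set.Icc (0:ℝ) 1, 0 ≤ f x)
    (hg0 : ∀ x ∈ Set.Icc (0:ℝ) 1, 0 ≤ g x)
    {ε δ : ℝ} (hε : 0 < ε) (hδ : 0 < δ)
    (hgu : ∀ x ∈ Set.Icc (0:ℝ) 1, ∀ y ∈ Set.Icc (0:ℝ) 1, |x - y| < δ → |g x - g y| < ε)
    (n : ℕ) (t : ℕ → ℝ) (htn : ∀ i ≤ n, t i ∈ Set.Icc (0:ℝ) 1)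
    (hdense : ∀ x ∈ Set.Icc (0:ℝ) 1, ∃ i ≤ n, |x - t i| < δ) :
    ∀ p ∈ hypo g, Metric.infDist p (hypo f) ≤ sSup (Aset f g n t) + (δ + ε) := by
  intro p hp
  obtain ⟨hx, hy0, hyg⟩ := hp
  set x := p 0
  set y := p 1
  have hfne : (hypo f).Nonempty := hypo_nonempty f hf0
  have hsup0 : 0 ≤ sSup (Aset f g n t) := Aset_sSup_nonneg f g n t
  by_cases hyf : y ≤ f x
  · have : p ∈ hypo f := ⟨hx, hy0, hyf⟩
    rw [Metric.infDist_zero_of_mem this]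
    linarith
  · push_neg at hyf
    -- raise the point to height g x
    have hstep1 : Metric.infDist p (hypo f) ≤ Metric.infDist (pt x (g x)) (hypo f) := by
      rw [← pt_eta p]
      exact lemB f hfne hy0 hyg
    obtain ⟨i, hi, hix⟩ := hdense x hx
    have hti : t i ∈ Set.Icc (0:ℝ) 1 := htn i hi
    have hdxi : dist (pt x (g x)) (pt (t i) (g (t i))) ≤ δ + ε := by
      refine le_trans (dist_pt_le _ _ _ _) ?_
      linarith [le_of_lt (hgu x hx (t i) hti hix), le_of_lt hix]
    have hstep2 : Metric.infDist (pt x (g x)) (hypo f) ≤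
        Metric.infDist (pt (t i) (g (t i))) (hypo f) + (δ + ε) :=
      le_trans (Metric.infDist_le_infDist_add_dist) (by linarith)
    have hstep3 : Metric.infDist (pt (t i) (g (t i))) (hypo f) ≤ sSup (Aset f g n t) := by
      by_cases hcase : g (t i) ≤ f (t i)
      · rw [Metric.infDist_zero_of_mem (mem_hypo hti (hg0 _ hti) hcase)]
        exact hsup0
      · push_neg at hcase
        have hsub : Metric.infDist (pt (t i) (g (t i))) (hypo f) ≤
            Metric.infDist (pt (t i) (g (t i))) (Dset f n t) :=
          Metric.infDist_le_infDist_of_subset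
            (Dset_subset_hypo f hf0 n t htn) (Dset_nonempty f n t)
        have hmem : Metric.infDist (pt (t i) (g (t i))) (Dset f n t) ∈ Aset f g n t :=
          ⟨i, hi, hcase, rfl⟩
        exact le_trans hsub (le_csSup (Aset_finite f g n t).bddAbove hmem)
    linarith

/-- As the mesh of the partition tends to `0`, the discrete approximation
`H̃(f,g)` converges to `ℍ(f,g)`, for continuous nonnegative `f, g`. -/
theorem stmt_17 (f g : ℝ → ℝ)
    (hf0 : ∀ x ∈ Set.Icc (0:ℝ) 1, 0 ≤ f x)
    (hg0 : ∀ x ∈ Set.Icc (0:ℝ) 1, 0 ≤ g x)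
    (hfc : ContinuousOn f (Set.Icc (0:ℝ) 1))
    (hgc : ContinuousOn g (Set.Icc (0:ℝ) 1)) :
    ∀ ε : ℝ, 0 < ε → ∃ δ : ℝ, 0 < δ ∧
      ∀ (n : ℕ) (t : ℕ → ℝ), 0 < n → t 0 = 0 → t n = 1 →
        (∀ i < n, t i < t (i+1)) → (∀ i < n, t (i+1) - t i < δ) →
        |Htilde f g n t - HH f g| < ε := by
  intro ε hε
  have hε4 : 0 < ε / 4 := by linarith
  obtain ⟨δf, hδf, hfu⟩ := Metric.uniformContinuousOn_iff.mp
    (isCompact_Icc.uniformContinuousOn_of_continuous hfc) (ε / 4) hε4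
  obtain ⟨δg, hδg, hgu⟩ := Metric.uniformContinuousOn_iff.mp
    (isCompact_Icc.uniformContinuousOn_of_continuous hgc) (ε / 4) hε4
  set δ : ℝ := min (min δf δg) (ε / 4) with hδdef
  have hδ : 0 < δ := lt_min (lt_min hδf hδg) hε4
  refine ⟨δ, hδ, ?_⟩
  intro n t hn h0 h1 hmono hmesh
  classical
  -- monotonicity of the partition
  have tmono : ∀ j, j ≤ n → ∀ i ≤ j, t i ≤ t j := by
    intro j
    induction j with
    | zero => intro _ i hi; interval_cases i; exact le_refl _
    | succ k ih =>
      intro hj i hi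
      rcases Nat.eq_or_lt_of_le hi with h | h
      · rw [h]
      · exact le_trans (ih (le_trans (Nat.le_succ k) hj) i (Nat.lt_succ_iff.mp h))
          (le_of_lt (hmono k (Nat.lt_of_succ_le hj)))
  have htn : ∀ i ≤ n, t i ∈ Set.Icc (0:ℝ) 1 := by
    intro i hi
    constructor
    · rw [← h0]; exact tmono i hi 0 (Nat.zero_le i)
    · rw [← h1]; exact tmono n (le_refl n) i hi
  -- density of the partition
  have hdense : ∀ x ∈ Set.Icc (0:ℝ) 1, ∃ i ≤ n, |x - t i| < δ := by
    intro x hx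
    by_cases hxn : t n ≤ x
    · refine ⟨n, le_refl n, ?_⟩
      rw [h1] at hxn
      have hx1 : x = 1 := le_antisymm hx.2 hxn
      rw [hx1, h1]
      simpa using hδ
    · push_neg at hxn
      set i := Nat.findGreatest (fun i => t i ≤ x) n with hidef
      have hP0 : t 0 ≤ x := by rw [h0]; exact hx.1
      have hile : i ≤ n := Nat.findGreatest_le n
      have hti : t i ≤ x := by
        rw [hidef]
        exact Nat.findGreatest_spec (P := fun j => t j ≤ x) (Nat.zero_le n) hP0
      have hiltn : i < n := by
        rcases Nat.lt_or_ge i n with h | h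
        · exact h
        · exfalso
          have : i = n := le_antisymm hile h
          rw [this] at hti
          linarith
      have hnext : x < t (i + 1) := by
        by_contra hc
        push_neg at hc
        refine Nat.findGreatest_is_greatest (P := fun j => t j ≤ x)
          (show Nat.findGreatest (fun j => t j ≤ x) n < i + 1 from ?_)
          (Nat.succ_le_of_lt hiltn) hc
        rw [← hidef]
        exact Nat.lt_succ_self _
      refine ⟨i, hile, ?_⟩
      rw [abs_of_nonneg (by linarith)]
      have := hmesh i hiltn
      linarith
  -- uniform continuity restated with δ
  have hfu' : ∀ x ∈ Set.Icc (0:ℝ) 1, ∀ y ∈ Set.Icc (0:ℝ) 1, |x - y| < δ → |f x - f y| < ε / 4 := by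
    intro x hx y hy hxy
    have : dist x y < δf := lt_of_lt_of_le (by rwa [Real.dist_eq])
      (le_trans (min_le_left _ _) (min_le_left _ _))
    have := hfu x hx y hy this
    rwa [Real.dist_eq] at this
  have hgu' : ∀ x ∈ Set.Icc (0:ℝ) 1, ∀ y ∈ Set.Icc (0:ℝ) 1, |x - y| < δ → |g x - g y| < ε / 4 := by
    intro x hx y hy hxy
    have : dist x y < δg := lt_of_lt_of_le (by rwa [Real.dist_eq])
      (le_trans (min_le_left _ _) (min_le_right _ _))
    have := hgu x hx y hy this
    rwa [Real.dist_eq] at this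
  have hδε : δ ≤ ε / 4 := min_le_right _ _
  -- upper bounds
  have hup1 := upper_bound f g hf0 hg0 hfc hgc hε4 hδ hfu' n t htn hdense
  have hup2 := upper_bound g f hg0 hf0 hgc hfc hε4 hδ hgu' n t htn hdense
  have hHHcomm : HH g f = HH f g := by rw [HH_def, HH_def, Metric.hausdorffDist_comm]
  have hupper : Htilde f g n t ≤ HH f g + ε / 2 := by
    rw [Htilde_eq]
    apply max_le
    · linarith
    · rw [hHHcomm] at hup2; linarith
  -- lower bounds
  have hlow1 := lower_bound f g hf0 hg0 hε4 hδ hgu' n t htn hdense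
  have hlow2 := lower_bound g f hg0 hf0 hε4 hδ hfu' n t htn hdense
  have hHt : HH f g ≤ Htilde f g n t + ε / 2 := by
    rw [HH_def]
    apply Metric.hausdorffDist_le_of_infDist
    · have h1 := Aset_sSup_nonneg f g n t
      have h2 := Aset_sSup_nonneg g f n t
      rw [Htilde_eq]
      have := le_max_left (sSup (Aset f g n t)) (sSup (Aset g f n t))
      linarith
    · intro p hp
      have := hlow2 p hp
      have hmax := le_max_right (sSup (Aset f g n t)) (sSup (Aset g f n t))
      rw [Htilde_eq]
      linarith
    · intro p hp
      have := hlow1 p hp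
      have hmax := le_max_left (sSup (Aset f g n t)) (sSup (Aset g f n t))
      rw [Htilde_eq]
      linarith
  rw [abs_sub_lt_iff]
  constructor <;> linarith
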